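/- For every complex number s with 0 < Re(s) < 1, one has ∫₀^{π/2} (sin θ)^{−s} dθ = (π/2)/(1−s) + (s/(1−s)) · ∫₀^{π/2} θ^{1−s} · (sin θ/θ)^{−s−1} · (d/dθ)(sin θ/θ) dθ, where both integrals converge absolutely and complex powers of the positive reals sin θ, θ, and sin θ/θ are taken with the real branch of the logarithm. -/

import Mathlib

open MeasureTheory Complex Real

noncomputable section

namespace SfunAux

lemma hasDerivAt_sinc {θ : ℝ} (hθ : θ ≠ 0) :
    HasDerivAt (fun u : ℝ => Real.sin u / u)
      ((Real.cos θ * θ - Real.sin θ * 1) / θ ^ 2) θ :=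
  (Real.hasDerivAt_sin θ).div (hasDerivAt_id θ) hθ

lemma deriv_sinc {θ : ℝ} (hθ : θ ≠ 0) :
    deriv (fun u : ℝ => Real.sin u / u) θ
      = (Real.cos θ * θ - Real.sin θ * 1) / θ ^ 2 :=
  (hasDerivAt_sinc hθ).deriv

lemma abs_deriv_sinc_le {θ : ℝ} (h0 : 0 < θ) (hb : θ < Real.pi / 2) :
    |deriv (fun u : ℝ => Real.sin u / u) θ| ≤ 2 / θ := by
  rw [deriv_sinc h0.ne', abs_div]
  have hsin0 : 0 < Real.sin θ :=
    Real.sin_pos_of_pos_of_lt_pi h0 (by nlinarith [Real.pi_pos])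
  have hsin1 : Real.sin θ ≤ θ := Real.sin_le h0.le
  have hcos : |Real.cos θ| ≤ 1 := Real.abs_cos_le_one θ
  have h1 : |Real.cos θ * θ - Real.sin θ * 1| ≤ 2 * θ := by
    have : |Real.cos θ * θ| ≤ θ := by
      rw [abs_mul, abs_of_pos h0]
      nlinarith
    have h2 : |Real.sin θ * 1| ≤ θ := by
      rw [mul_one, abs_of_pos hsin0]; exact hsin1
    calc |Real.cos θ * θ - Real.sin θ * 1|
        ≤ |Real.cos θ * θ| + |Real.sin θ * 1| := abs_sub _ _
      _ ≤ 2 * θ := by linarith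
  have h2 : |θ ^ 2| = θ ^ 2 := abs_of_pos (by positivity)
  rw [h2]
  rw [div_le_div_iff₀ (by positivity) h0]
  nlinarith

lemma contAt_cpow_sinc {θ : ℝ} (c : ℂ) (h0 : 0 < θ) (hs : 0 < Real.sin θ) :
    ContinuousAt (fun t : ℝ => ((Real.sin t / t : ℝ) : ℂ) ^ c) θ := by
  have hdiv : ContinuousAt (fun t : ℝ => Real.sin t / t) θ :=
    Real.continuous_sin.continuousAt.div continuousAt_id h0.ne'
  exact ContinuousAt.comp (g := fun y : ℝ => ((y : ℝ) : ℂ) ^ c)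
    (f := fun t : ℝ => Real.sin t / t)
    (Complex.continuousAt_ofReal_cpow_const _ c (Or.inr (div_pos hs h0).ne')) hdiv

lemma contAt_D {θ : ℝ} (h0 : θ ≠ 0) :
    ContinuousAt (fun t : ℝ => (((Real.cos t * t - Real.sin t * 1) / t ^ 2 : ℝ) : ℂ)) θ := by
  refine Complex.continuous_ofReal.continuousAt.comp ?_
  refine ContinuousAt.div ?_ ?_ (pow_ne_zero 2 h0)
  · exact (Real.continuous_cos.continuousAt.mul continuousAt_id).sub
      (Real.continuous_sin.continuousAt.mul continuousAt_const)
  · exact continuousAt_id.pow 2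

end SfunAux

open SfunAux

set_option maxHeartbeats 2000000 in
/-- for `0 < Re(s) < 1`,
`∫₀^{π/2} (sin θ)^{−s} dθ
  = (π/2)/(1−s) + (s/(1−s)) ∫₀^{π/2} θ^{1−s} (sin θ/θ)^{−s−1} (sin θ/θ)' dθ`,
both integrals converging absolutely; complex powers of the positive reals `sin θ`, `θ` and
`sin θ/θ` are taken with the real branch of the logarithm (i.e. the principal `cpow`). -/
theorem Sfun_integration_by_parts (s : ℂ) (h0 : 0 < s.re) (h1 : s.re < 1) :
    IntegrableOn (fun θ : ℝ => ((Real.sin θ : ℝ) : ℂ) ^ (-s))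
      (Set.Ioo 0 (Real.pi / 2)) ∧
    IntegrableOn (fun θ : ℝ => ((θ : ℝ) : ℂ) ^ (1 - s) *
        (((Real.sin θ / θ : ℝ)) : ℂ) ^ (-s - 1) *
        ((deriv (fun u : ℝ => Real.sin u / u) θ : ℝ) : ℂ))
      (Set.Ioo 0 (Real.pi / 2)) ∧
    (∫ θ in Set.Ioo (0 : ℝ) (Real.pi / 2), ((Real.sin θ : ℝ) : ℂ) ^ (-s))
      = ((Real.pi / 2 : ℝ) : ℂ) / (1 - s) +
        (s / (1 - s)) * ∫ θ in Set.Ioo (0 : ℝ) (Real.pi / 2),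
          ((θ : ℝ) : ℂ) ^ (1 - s) * (((Real.sin θ / θ : ℝ)) : ℂ) ^ (-s - 1) *
            ((deriv (fun u : ℝ => Real.sin u / u) θ : ℝ) : ℂ) := by
  have hb : (0 : ℝ) < Real.pi / 2 := by positivity
  have hpi : (0 : ℝ) < Real.pi := Real.pi_pos
  have hs1 : (1 : ℂ) - s ≠ 0 := by
    intro h
    have : ((1 : ℂ) - s).re = 0 := by rw [h]; simp
    rw [Complex.sub_re, Complex.one_re] at this
    linarith
  have hsne : -s ≠ -1 := by
    intro h
    have hs' : s = 1 := neg_inj.mp h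
    rw [hs'] at h1
    rw [Complex.one_re] at h1
    exact lt_irrefl _ h1
  -- basic facts on Ioo
  have hsin_pos : ∀ θ ∈ Set.Ioo (0 : ℝ) (Real.pi / 2), 0 < Real.sin θ := by
    intro θ hθ
    exact Real.sin_pos_of_pos_of_lt_pi hθ.1 (by nlinarith [hθ.2])
  have hjordan : ∀ θ ∈ Set.Ioo (0 : ℝ) (Real.pi / 2), 2 / Real.pi ≤ Real.sin θ / θ := by
    intro θ hθ
    rw [le_div_iff₀ hθ.1]
    exact Real.mul_le_sin hθ.1.le hθ.2.le
  have h2pi : (0 : ℝ) < 2 / Real.pi := by positivity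
  -- dominating function
  have hrpow : IntegrableOn (fun θ : ℝ => θ ^ (-s.re)) (Set.Ioo 0 (Real.pi / 2)) := by
    have := intervalIntegral.intervalIntegrable_rpow' (a := 0) (b := Real.pi / 2)
      (r := -s.re) (by linarith)
    rwa [intervalIntegrable_iff_integrableOn_Ioo_of_le hb.le] at this
  -- continuity of the integrands on Ioo
  have hcont1 : ContinuousOn (fun θ : ℝ => ((Real.sin θ : ℝ) : ℂ) ^ (-s))
      (Set.Ioo 0 (Real.pi / 2)) := by
    intro θ hθ
    exact ((Complex.continuousAt_ofReal_cpow_const _ _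
      (Or.inr (hsin_pos θ hθ).ne')).comp Real.continuous_sin.continuousAt).continuousWithinAt
  have hcont2 : ContinuousOn (fun θ : ℝ => ((θ : ℝ) : ℂ) ^ (1 - s) *
      (((Real.sin θ / θ : ℝ)) : ℂ) ^ (-s - 1) *
      ((deriv (fun u : ℝ => Real.sin u / u) θ : ℝ) : ℂ)) (Set.Ioo 0 (Real.pi / 2)) := by
    apply ContinuousOn.congr (f := fun θ : ℝ => ((θ : ℝ) : ℂ) ^ (1 - s) *
      (((Real.sin θ / θ : ℝ)) : ℂ) ^ (-s - 1) *
      (((Real.cos θ * θ - Real.sin θ * 1) / θ ^ 2 : ℝ) : ℂ))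
    · intro θ hθ
      refine ContinuousWithinAt.mul (ContinuousWithinAt.mul ?_ ?_) ?_
      · exact (Complex.continuousAt_ofReal_cpow_const _ _
          (Or.inr hθ.1.ne')).continuousWithinAt
      · exact (contAt_cpow_sinc _ hθ.1 (hsin_pos θ hθ)).continuousWithinAt
      · exact (contAt_D hθ.1.ne').continuousWithinAt
    · intro θ hθ
      simp only
      rw [deriv_sinc hθ.1.ne']
  -- integrability of the first integrand
  have hint1 : IntegrableOn (fun θ : ℝ => ((Real.sin θ : ℝ) : ℂ) ^ (-s))
      (Set.Ioo 0 (Real.pi / 2)) := by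
    apply Integrable.mono' (g := fun θ : ℝ => (2 / Real.pi) ^ (-s.re) * θ ^ (-s.re))
      (hrpow.const_mul _)
      (hcont1.aestronglyMeasurable measurableSet_Ioo)
    filter_upwards [ae_restrict_mem measurableSet_Ioo] with θ hθ
    have hs' := hsin_pos θ hθ
    rw [Complex.norm_cpow_eq_rpow_re_of_pos hs']
    have : (Real.sin θ) ^ (-s).re ≤ (2 / Real.pi * θ) ^ (-s).re := by
      apply Real.rpow_le_rpow_of_nonpos (mul_pos h2pi hθ.1)
        (Real.mul_le_sin hθ.1.le hθ.2.le)
      simp only [Complex.neg_re]; linarith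
    calc (Real.sin θ) ^ (-s).re ≤ (2 / Real.pi * θ) ^ (-s).re := this
      _ = (2 / Real.pi) ^ (-s.re) * θ ^ (-s.re) := by
          rw [Real.mul_rpow h2pi.le hθ.1.le]; simp
  -- integrability of the second integrand
  have hint2 : IntegrableOn (fun θ : ℝ => ((θ : ℝ) : ℂ) ^ (1 - s) *
      (((Real.sin θ / θ : ℝ)) : ℂ) ^ (-s - 1) *
      ((deriv (fun u : ℝ => Real.sin u / u) θ : ℝ) : ℂ)) (Set.Ioo 0 (Real.pi / 2)) := by
    apply Integrable.mono'
      (g := fun θ : ℝ => 2 * (2 / Real.pi) ^ (-s.re - 1) * θ ^ (-s.re))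
      (hrpow.const_mul _)
      (hcont2.aestronglyMeasurable measurableSet_Ioo)
    filter_upwards [ae_restrict_mem measurableSet_Ioo] with θ hθ
    have hs' := hsin_pos θ hθ
    have hq : 0 < Real.sin θ / θ := div_pos hs' hθ.1
    rw [norm_mul, norm_mul,
      Complex.norm_cpow_eq_rpow_re_of_pos hθ.1, Complex.norm_cpow_eq_rpow_re_of_pos hq,
      Complex.norm_real, Real.norm_eq_abs]
    have e1 : (1 - s).re = 1 - s.re := by simp
    have e2 : (-s - 1).re = -s.re - 1 := by simp
    rw [e1, e2]
    have b1 : (Real.sin θ / θ) ^ (-s.re - 1) ≤ (2 / Real.pi) ^ (-s.re - 1) :=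
      Real.rpow_le_rpow_of_nonpos h2pi (hjordan θ hθ) (by linarith)
    have b2 : |deriv (fun u : ℝ => Real.sin u / u) θ| ≤ 2 / θ :=
      abs_deriv_sinc_le hθ.1 hθ.2
    have key : θ ^ (1 - s.re) * (2 / θ) = 2 * θ ^ (-s.re) := by
      have : (1 : ℝ) - s.re = -s.re + 1 := by ring
      rw [this, Real.rpow_add hθ.1, Real.rpow_one]
      field_simp [hθ.1.ne']
    calc θ ^ (1 - s.re) * (Real.sin θ / θ) ^ (-s.re - 1)
          * |deriv (fun u : ℝ => Real.sin u / u) θ|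
        ≤ θ ^ (1 - s.re) * (2 / Real.pi) ^ (-s.re - 1) * (2 / θ) := by
          apply mul_le_mul
            (mul_le_mul le_rfl b1 (Real.rpow_nonneg hq.le _) (Real.rpow_nonneg hθ.1.le _)) b2
            (abs_nonneg _)
            (mul_nonneg (Real.rpow_nonneg hθ.1.le _) (Real.rpow_nonneg h2pi.le _))
      _ = 2 * (2 / Real.pi) ^ (-s.re - 1) * θ ^ (-s.re) := by
          rw [mul_right_comm, key]; ring
  refine ⟨hint1, hint2, ?_⟩
  -- The antiderivative
  set F : ℝ → ℂ := fun θ =>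
    ((θ : ℝ) : ℂ) ^ (1 - s) / (1 - s) * (((Real.sin θ / θ : ℝ)) : ℂ) ^ (-s) with hF_def
  -- derivative of F on the open interval
  have hF : ∀ θ ∈ Set.Ioo (0 : ℝ) (Real.pi / 2),
      HasDerivAt F (((Real.sin θ : ℝ) : ℂ) ^ (-s) +
        (-s / (1 - s)) * (((θ : ℝ) : ℂ) ^ (1 - s) *
          (((Real.sin θ / θ : ℝ)) : ℂ) ^ (-s - 1) *
          ((deriv (fun u : ℝ => Real.sin u / u) θ : ℝ) : ℂ))) θ := by
    intro θ hθ
    have hθ0 := hθ.1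
    have hs' := hsin_pos θ hθ
    have hq : 0 < Real.sin θ / θ := div_pos hs' hθ0
    have hu : HasDerivAt (fun y : ℝ => ((y : ℝ) : ℂ) ^ (1 - s) / (1 - s))
        (((θ : ℝ) : ℂ) ^ (-s)) θ := by
      have := hasDerivAt_ofReal_cpow_const' hθ0.ne' hsne
      simpa [neg_add_eq_sub] using this
    have hf := hasDerivAt_sinc hθ0.ne'
    have hg : HasDerivAt (fun t : ℝ => (((Real.sin t / t : ℝ)) : ℂ) ^ (-s))
        ((-s) * (((Real.sin θ / θ : ℝ)) : ℂ) ^ (-s - 1) *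
          (((Real.cos θ * θ - Real.sin θ * 1) / θ ^ 2 : ℝ) : ℂ)) θ :=
      ((Complex.hasStrictDerivAt_cpow_const (c := -s)
        (Complex.ofReal_mem_slitPlane.2 hq)).hasDerivAt).comp θ (h₂ := fun z : ℂ => z ^ (-s)) (hf.ofReal_comp)
    have hprod := hu.mul hg
    convert hprod using 1
    · rfl
    · rfl
    rw [deriv_sinc hθ0.ne']
    have hsplit : ((Real.sin θ : ℝ) : ℂ) ^ (-s)
        = ((θ : ℝ) : ℂ) ^ (-s) * (((Real.sin θ / θ : ℝ)) : ℂ) ^ (-s) := by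
      rw [← Complex.mul_cpow_ofReal_nonneg hθ0.le hq.le, ← Complex.ofReal_mul,
        show θ * (Real.sin θ / θ) = Real.sin θ by field_simp]
    rw [hsplit]
    field_simp
  -- continuity of F on the closed interval
  have hFcont : ContinuousOn F (Set.Icc 0 (Real.pi / 2)) := by
    intro x hx
    rcases eq_or_ne x 0 with rfl | hx0
    · have hF0 : F 0 = 0 := by
        simp [hF_def, Complex.zero_cpow hs1]
      rw [ContinuousWithinAt, hF0]
      apply squeeze_zero_norm'
        (a := fun θ : ℝ => (2 / Real.pi) ^ (-s.re) / ‖1 - s‖ * θ ^ (1 - s.re))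
      · filter_upwards [self_mem_nhdsWithin] with θ hθ
        rcases eq_or_lt_of_le hθ.1 with rfl | hθ0
        · simp [hF_def, Complex.zero_cpow hs1, Real.zero_rpow (by linarith : (1:ℝ) - s.re ≠ 0)]
        · have hs' : 0 < Real.sin θ := Real.sin_pos_of_pos_of_lt_pi hθ0 (by nlinarith [hθ.2])
          have hq : 0 < Real.sin θ / θ := div_pos hs' hθ0
          have hj : 2 / Real.pi ≤ Real.sin θ / θ := by
            rw [le_div_iff₀ hθ0]; exact Real.mul_le_sin hθ0.le hθ.2
          rw [hF_def]
          simp only [norm_mul, norm_div,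
            Complex.norm_cpow_eq_rpow_re_of_pos hθ0,
            Complex.norm_cpow_eq_rpow_re_of_pos hq]
          have e1 : (1 - s).re = 1 - s.re := by simp
          have e2 : (-s).re = -s.re := by simp
          rw [e1, e2]
          have hple : (Real.sin θ / θ) ^ (-s.re) ≤ (2 / Real.pi) ^ (-s.re) :=
            Real.rpow_le_rpow_of_nonpos h2pi hj (by linarith)
          have habs : 0 < ‖1 - s‖ := norm_pos_iff.mpr hs1
          rw [div_mul_eq_mul_div, div_mul_eq_mul_div, div_le_div_iff₀ habs habs]
          have h2 : 0 ≤ θ ^ (1 - s.re) := Real.rpow_nonneg hθ0.le _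
          nlinarith [mul_le_mul_of_nonneg_right (mul_le_mul_of_nonneg_left hple h2) habs.le]
      · have htend : Filter.Tendsto (fun θ : ℝ => θ ^ (1 - s.re)) (nhds 0)
            (nhds ((0:ℝ) ^ (1 - s.re))) :=
          (Real.continuousAt_rpow_const 0 (1 - s.re) (Or.inr (by linarith))).tendsto
        rw [Real.zero_rpow (by linarith : (1:ℝ) - s.re ≠ 0)] at htend
        have := (htend.const_mul ((2 / Real.pi) ^ (-s.re) / ‖1 - s‖)).mono_left
          (nhdsWithin_le_nhds (s := Set.Icc 0 (Real.pi / 2)))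
        simpa using this
    · have hx0' : 0 < x := lt_of_le_of_ne hx.1 (Ne.symm hx0)
      have hs' : 0 < Real.sin x := Real.sin_pos_of_pos_of_lt_pi hx0' (by nlinarith [hx.2])
      have hq : 0 < Real.sin x / x := div_pos hs' hx0'
      apply ContinuousAt.continuousWithinAt
      exact (((Complex.continuousAt_ofReal_cpow_const x _ (Or.inr hx0)).div_const _).mul
        (contAt_cpow_sinc _ hx0' hs'))
  -- FTC
  have hG : IntervalIntegrable (fun θ : ℝ => ((Real.sin θ : ℝ) : ℂ) ^ (-s) +
      (-s / (1 - s)) * (((θ : ℝ) : ℂ) ^ (1 - s) *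
        (((Real.sin θ / θ : ℝ)) : ℂ) ^ (-s - 1) *
        ((deriv (fun u : ℝ => Real.sin u / u) θ : ℝ) : ℂ))) volume 0 (Real.pi / 2) := by
    rw [intervalIntegrable_iff_integrableOn_Ioo_of_le hb.le]
    exact hint1.add (hint2.const_mul _)
  have hFTC := intervalIntegral.integral_eq_sub_of_hasDeriv_right_of_le hb.le hFcont
    (fun x hx => (hF x hx).hasDerivWithinAt) hG
  rw [intervalIntegral.integral_of_le hb.le, MeasureTheory.integral_Ioc_eq_integral_Ioo] at hFTC
  rw [MeasureTheory.integral_add hint1 (hint2.const_mul _),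
    MeasureTheory.integral_const_mul] at hFTC
  -- boundary values
  have hF0 : F 0 = 0 := by simp [hF_def, Complex.zero_cpow hs1]
  have hFb : F (Real.pi / 2) = ((Real.pi / 2 : ℝ) : ℂ) / (1 - s) := by
    have hxne : ((Real.pi / 2 : ℝ) : ℂ) ≠ 0 := by
      simp [Complex.ofReal_ne_zero]
    have harg : Complex.arg ((Real.pi / 2 : ℝ) : ℂ) ≠ Real.pi := by
      rw [Complex.arg_ofReal_of_nonneg hb.le]
      exact (Real.pi_ne_zero).symm
    rw [hF_def]
    simp only [Real.sin_pi_div_two]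
    have h2 : ((1 / (Real.pi / 2) : ℝ) : ℂ) = (((Real.pi / 2 : ℝ) : ℂ))⁻¹ := by
      push_cast; rw [one_div]
    rw [h2, Complex.inv_cpow _ _ harg, Complex.cpow_neg, inv_inv,
      div_mul_eq_mul_div, ← Complex.cpow_add _ _ hxne, sub_add_cancel, Complex.cpow_one]
  rw [hF0, hFb, sub_zero] at hFTC
  linear_combination hFTC

end
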